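/- The sequence of frames (H_n)_{n∈ω}, where H_n = ⟨{a} ∪ B_n ∪ C_n, E_n⟩ with C_n = {k : k ≤ n+1}, B_n = {X ⊆ C_n : |X| = 2}, and E_n = {(a,u) : u ∈ B_n ∪ C_n} ∪ {(b,c) ∈ B_n × C_n : c ∈ b}, is irreducible: for all i ≠ j, no point-generated subframe of H_j is reducible to H_i. -/

import Mathlib

/-- A Kripke frame: a set of worlds with a binary relation. -/
structure Frame where
  World : Type
  rel : World → World → Prop

/-- `f` is a reduction (surjective p-morphism) of `F` to `G`. -/
def Reduction (F G : Frame) (f : F.World → G.World) : Prop :=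
  Function.Surjective f ∧
  (∀ w u, F.rel w u → G.rel (f w) (f u)) ∧
  (∀ w v, G.rel (f w) v → ∃ u, F.rel w u ∧ f u = v)

/-- `F` is reducible to `G`. -/
def Reducible (F G : Frame) : Prop := ∃ f, Reduction F G f

/-- The subframe of `F` generated by the point `w`. -/
def Frame.genSub (F : Frame) (w : F.World) : Frame :=
  ⟨{v // Relation.ReflTransGen F.rel w v}, fun a b => F.rel a.1 b.1⟩

/-- The worlds of the frame `H n`: the root `a` (encoded `none`), the
two-element subsets of `C n = {0, …, n+1}` (the set `B n`), and the elements of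
`C n` itself. -/
def HWorld (n : ℕ) : Type := Option (({s : Finset (Fin (n + 2)) // s.card = 2}) ⊕ Fin (n + 2))

/-- The relation of the frame `H n`: the root sees everything else, and a
two-element set `b ∈ B n` sees exactly its two elements. -/
def Hrel (n : ℕ) : HWorld n → HWorld n → Prop := fun x y =>
  match x, y with
  | none, some _ => True
  | some (Sum.inl b), some (Sum.inr c) => c ∈ b.1
  | _, _ => False

/-- The frame `H n`. -/
def HFrame (n : ℕ) : Frame := ⟨HWorld n, Hrel n⟩

/-- The sequence `(H n)` is irreducible: for all `i ≠ j`, no point-generated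
subframe of `H j` is reducible to `H i`. -/
lemma not_hrel_inr (n : ℕ) (c : Fin (n + 2)) (y : HWorld n) :
    ¬ Hrel n (some (Sum.inr c)) y := by
  rcases y with _ | (b | c') <;> exact id

lemma succ_inl {n : ℕ} {b : {s : Finset (Fin (n + 2)) // s.card = 2}} {u : HWorld n}
    (h : Hrel n (some (Sum.inl b)) u) : ∃ c, u = some (Sum.inr c) ∧ c ∈ b.1 := by
  rcases u with _ | (b2 | c)
  · exact absurd h id
  · exact absurd h id
  · exact ⟨c, rfl, h⟩

lemma mem_gen (j : ℕ) (v : HWorld j) : Relation.ReflTransGen (Hrel j) none v := by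
  cases v with
  | none => exact .refl
  | some x => exact .single trivial

theorem hframe_irreducible :
    ∀ i j : ℕ, i ≠ j → ∀ w : (HFrame j).World,
      ¬ Reducible ((HFrame j).genSub w) (HFrame i) := by
  rintro i j hij w ⟨f, hsurj, hfwd, hback⟩
  rcases w with _ | (b | c)
  · -- generated by the root: the subframe is the whole frame
    set g : HWorld j → HWorld i := fun v => f ⟨v, mem_gen j v⟩ with hg_def
    have gsurj : Function.Surjective g := by
      intro y
      obtain ⟨x, hx⟩ := hsurj y
      refine ⟨x.1, ?_⟩
      have : (⟨x.1, mem_gen j x.1⟩ : {v // Relation.ReflTransGen (Hrel j) none v}) = x :=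
        Subtype.ext rfl
      simp only [hg_def, this, hx]
      exact (congrArg f this).trans hx
    have gfwd : ∀ u v, Hrel j u v → Hrel i (g u) (g v) := fun u v h =>
      hfwd ⟨u, mem_gen j u⟩ ⟨v, mem_gen j v⟩ h
    have gback : ∀ w v, Hrel i (g w) v → ∃ u, Hrel j w u ∧ g u = v := by
      intro w v h
      obtain ⟨u, hu, he⟩ := hback ⟨w, mem_gen j w⟩ v h
      refine ⟨u.1, hu, ?_⟩
      have : (⟨u.1, mem_gen j u.1⟩ : {v // Relation.ReflTransGen (Hrel j) none v}) = u :=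
        Subtype.ext rfl
      simp only [hg_def, this, he]
      exact (congrArg f this).trans he
    -- dead ends map to dead ends
    have hdead : ∀ c : Fin (j + 2), ∃ c', g (some (Sum.inr c)) = some (Sum.inr c') := by
      intro c
      rcases hg : g (some (Sum.inr c)) with _ | (b' | c')
      · obtain ⟨u, hu, _⟩ := gback (some (Sum.inr c)) (some (Sum.inr 0)) (by rw [hg]; trivial)
        exact absurd hu (not_hrel_inr j c u)
      · obtain ⟨e, he⟩ := Finset.card_pos.mp (by omega : 0 < b'.1.card)
        obtain ⟨u, hu, _⟩ := gback (some (Sum.inr c)) (some (Sum.inr e)) (by rw [hg]; exact he)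
        exact absurd hu (not_hrel_inr j c u)
      · exact ⟨c', rfl⟩
    choose h hh using hdead
    have h01i : (0 : Fin (i + 2)) ≠ 1 := by
      simp [Fin.ext_iff]
    -- the 2-sets map to 2-sets
    have hBmap : ∀ b : {s : Finset (Fin (j + 2)) // s.card = 2},
        ∃ b', g (some (Sum.inl b)) = some (Sum.inl b') := by
      intro b
      rcases hg : g (some (Sum.inl b)) with _ | (b' | c')
      · obtain ⟨u, hu, he⟩ := gback (some (Sum.inl b))
          (some (Sum.inl ⟨{0, 1}, Finset.card_pair h01i⟩)) (by rw [hg]; trivial)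
        obtain ⟨c, rfl, _⟩ := succ_inl hu
        rw [hh c] at he
        injection he with he2
        cases he2
      · exact ⟨b', rfl⟩
      · obtain ⟨e, he⟩ := Finset.card_pos.mp (by omega : 0 < b.1.card)
        have := gfwd (some (Sum.inl b)) (some (Sum.inr e)) he
        rw [hg, hh e] at this
        exact absurd this (not_hrel_inr i c' _)
    -- h is injective
    have hinj : Function.Injective h := by
      intro c1 c2 heq
      by_contra hne
      obtain ⟨b', hb'⟩ := hBmap ⟨{c1, c2}, Finset.card_pair hne⟩
      obtain ⟨e1, he1, e2, he2, hee⟩ := Finset.one_lt_card.mp (by omega : 1 < b'.1.card)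
      have key : ∀ e ∈ b'.1, e = h c1 := by
        intro e he
        obtain ⟨u, hu, hgu⟩ := gback (some (Sum.inl ⟨{c1, c2}, Finset.card_pair hne⟩))
          (some (Sum.inr e)) (by rw [hb']; exact he)
        obtain ⟨c, rfl, hcb⟩ := succ_inl hu
        rw [hh c] at hgu
        injection hgu with hgu2
        injection hgu2 with hgu
        have : c = c1 ∨ c = c2 := by
          simpa [Finset.mem_insert, Finset.mem_singleton] using hcb
        rcases this with rfl | rfl
        · omega
        · omega
      have := (key e1 he1).trans (key e2 he2).symm
      exact hee this
    -- h is surjective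
    have hsur : Function.Surjective h := by
      intro c'
      obtain ⟨x, hx⟩ := gsurj (some (Sum.inr c'))
      rcases x with _ | (b | c)
      · have := gfwd none (some (Sum.inr 0)) trivial
        rw [hx] at this
        exact absurd this (not_hrel_inr i c' _)
      · obtain ⟨e, he⟩ := Finset.card_pos.mp (by omega : 0 < b.1.card)
        have := gfwd (some (Sum.inl b)) (some (Sum.inr e)) he
        rw [hx] at this
        exact absurd this (not_hrel_inr i c' _)
      · rw [hh c] at hx
        injection hx with hx2
        injection hx2 with hx
        exact ⟨c, hx⟩
    have h1 : j + 2 ≤ i + 2 := by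
      simpa using Fintype.card_le_of_injective h hinj
    have h2 : i + 2 ≤ j + 2 := by
      simpa using Fintype.card_le_of_surjective h hsur
    omega
  · -- generated by a 2-set b
    obtain ⟨x, hx⟩ := hsurj none
    have h01i : (0 : Fin (i + 2)) ≠ 1 := by simp [Fin.ext_iff]
    obtain ⟨u, hu, he⟩ := hback x (some (Sum.inl ⟨{0, 1}, Finset.card_pair h01i⟩))
      (by rw [hx]; trivial)
    -- x.1 is reachable from some (inl b)
    have hx1 := x.2
    rcases Relation.ReflTransGen.cases_head hx1 with heq | ⟨z, hz, hz'⟩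
    · -- x.1 = some (inl b); then u.1 = some (inr c), a dead end
      have hu' : Hrel j x.1 u.1 := hu
      rw [← heq] at hu'
      obtain ⟨c, hc, _⟩ := succ_inl hu'
      obtain ⟨e, hei⟩ := Finset.card_pos.mp
        (by simp [Finset.card_pair h01i] : 0 < ({0, 1} : Finset (Fin (i + 2))).card)
      obtain ⟨v, hv, _⟩ := hback u (some (Sum.inr e)) (by rw [he]; exact hei)
      have hv' : Hrel j u.1 v.1 := hv
      rw [hc] at hv'
      exact not_hrel_inr j c v.1 hv'
    · -- x.1 is a successor-descendant of b, i.e. a dead end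
      obtain ⟨c, hc, _⟩ := succ_inl hz
      rw [hc] at hz'
      rcases Relation.ReflTransGen.cases_head hz' with heq | ⟨z2, hz2, _⟩
      · have hu' : Hrel j x.1 u.1 := hu
        rw [← heq] at hu'
        exact not_hrel_inr j c u.1 hu'
      · exact not_hrel_inr j c z2 hz2
  · -- generated by a dead end c
    obtain ⟨x, hx⟩ := hsurj none
    obtain ⟨u, hu, _⟩ := hback x (some (Sum.inr 0)) (by rw [hx]; trivial)
    have hx1 := x.2
    rcases Relation.ReflTransGen.cases_head hx1 with heq | ⟨z, hz, _⟩
    · have hu' : Hrel j x.1 u.1 := hu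
      rw [← heq] at hu'
      exact not_hrel_inr j c u.1 hu'
    · exact not_hrel_inr j c z hz
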